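/- Let b₀ ≤ a₀ be reals and let μ : ℝ² → ℝ be integrable on T(b₀,a₀). Then ∫_{b₀}^{a₀} ( f⁻(v) − f⁺(v) ) dv = 2 ∬_{T(b₀,a₀)} μ(α,β)·(α − β) dα dβ. Consequently, the signed area enclosed by the major hysteresis loop of the Preisach operator with weighting μ generated by a periodic input with minimum b₀ and maximum a₀ equals 2 ∬_{T(b₀,a₀)} μ(α,β)(α−β) dα dβ, and this loop has zero signed area if and only if ∬_{T(b₀,a₀)} μ(α,β)(α−β) dα dβ = 0. -/

import Mathlib

/-!
STATEMENT 1: The signed area of the major hysteresis loop of the Preisach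
operator with weighting μ over the input range [b₀, a₀] equals
2 ∬_{T(b₀,a₀)} μ(α,β)(α−β) dα dβ, and it is zero iff that double integral is zero.
-/

open MeasureTheory

/-- The triangular subregion `T(b₀,a₀) = {(α,β) : b₀ ≤ β ≤ α ≤ a₀}` of the
Preisach plane (points are `p = (α, β)`). -/
def preisachTriangle (b₀ a₀ : ℝ) : Set (ℝ × ℝ) :=
  {p : ℝ × ℝ | b₀ ≤ p.2 ∧ p.2 ≤ p.1 ∧ p.1 ≤ a₀}

/-- Ascending branch of the Preisach operator with weighting `μ` over the
input range `[b₀, a₀]`: relays with `α < v` are `+1`, the rest are `−1`. -/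
noncomputable def ascendingBranch (μ : ℝ × ℝ → ℝ) (b₀ a₀ v : ℝ) : ℝ :=
  ∫ p in preisachTriangle b₀ a₀, μ p * (if p.1 < v then (1 : ℝ) else -1)

/-- Descending branch of the Preisach operator with weighting `μ` over the
input range `[b₀, a₀]`: relays with `β > v` are `−1`, the rest are `+1`. -/
noncomputable def descendingBranch (μ : ℝ × ℝ → ℝ) (b₀ a₀ v : ℝ) : ℝ :=
  ∫ p in preisachTriangle b₀ a₀, μ p * (if p.2 > v then (-1 : ℝ) else 1)

lemma preisachTriangle_measurableSet (b₀ a₀ : ℝ) :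
    MeasurableSet (preisachTriangle b₀ a₀) := by
  have : preisachTriangle b₀ a₀ =
      {p : ℝ × ℝ | b₀ ≤ p.2} ∩ ({p : ℝ × ℝ | p.2 ≤ p.1} ∩ {p : ℝ × ℝ | p.1 ≤ a₀}) := by
    ext p; simp [preisachTriangle, Set.mem_setOf_eq, and_assoc]
  rw [this]
  exact (measurableSet_le measurable_const measurable_snd).inter
    ((measurableSet_le measurable_snd measurable_fst).inter
      (measurableSet_le measurable_fst measurable_const))

lemma integrable_step₁ (x : ℝ) (s : Set ℝ) (hs : volume s < ⊤) :
    IntegrableOn (fun v : ℝ => if x < v then (1 : ℝ) else -1) s volume := by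
  have : IsFiniteMeasure (volume.restrict s) :=
    ⟨by rw [Measure.restrict_apply_univ]; exact hs⟩
  have hmeas : Measurable (fun v : ℝ => if x < v then (1 : ℝ) else -1) :=
    Measurable.ite (measurableSet_lt measurable_const measurable_id) measurable_const
      measurable_const
  refine (integrable_const (1 : ℝ)).mono' hmeas.aestronglyMeasurable ?_
  filter_upwards with v
  by_cases h : x < v <;> simp [h]

lemma integrable_step₂ (x : ℝ) (s : Set ℝ) (hs : volume s < ⊤) :
    IntegrableOn (fun v : ℝ => if v < x then (-1 : ℝ) else 1) s volume := by
  have : IsFiniteMeasure (volume.restrict s) :=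
    ⟨by rw [Measure.restrict_apply_univ]; exact hs⟩
  have hmeas : Measurable (fun v : ℝ => if v < x then (-1 : ℝ) else 1) :=
    Measurable.ite (measurableSet_lt measurable_id measurable_const) measurable_const
      measurable_const
  refine (integrable_const (1 : ℝ)).mono' hmeas.aestronglyMeasurable ?_
  filter_upwards with v
  by_cases h : v < x <;> simp [h]

/-- Integral of the step function `v ↦ if x < v then 1 else -1` over `Ioc c d`. -/
lemma step_integral₁ (c d x : ℝ) (h1 : c ≤ x) (h2 : x ≤ d) :
    ∫ v in Set.Ioc c d, (if x < v then (1 : ℝ) else -1) = (d - x) - (x - c) := by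
  have hsplit : Set.Ioc c d = Set.Ioc c x ∪ Set.Ioc x d := (Set.Ioc_union_Ioc_eq_Ioc h1 h2).symm
  rw [hsplit, setIntegral_union (Set.Ioc_disjoint_Ioc_of_le le_rfl) measurableSet_Ioc
    (integrable_step₁ _ _ measure_Ioc_lt_top) (integrable_step₁ _ _ measure_Ioc_lt_top)]
  have e1 : ∫ v in Set.Ioc c x, (if x < v then (1 : ℝ) else -1) = ∫ _ in Set.Ioc c x, (-1 : ℝ) := by
    refine setIntegral_congr_fun measurableSet_Ioc ?_
    intro v hv; simp [not_lt.mpr hv.2]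
  have e2 : ∫ v in Set.Ioc x d, (if x < v then (1 : ℝ) else -1) = ∫ _ in Set.Ioc x d, (1 : ℝ) := by
    refine setIntegral_congr_fun measurableSet_Ioc ?_
    intro v hv; simp [hv.1]
  rw [e1, e2]
  simp only [integral_const, measureReal_restrict_apply_univ, Real.volume_real_Ioc_of_le h1,
    Real.volume_real_Ioc_of_le h2, Measure.restrict_apply_univ, Real.volume_Ioc, smul_eq_mul,
    ENNReal.toReal_ofReal (sub_nonneg.mpr h1), ENNReal.toReal_ofReal (sub_nonneg.mpr h2)]
  ring

/-- Integral of the step function `v ↦ if v < x then -1 else 1` over `Ioc c d`. -/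
lemma step_integral₂ (c d x : ℝ) (h1 : c ≤ x) (h2 : x ≤ d) :
    ∫ v in Set.Ioc c d, (if v < x then (-1 : ℝ) else 1) = (d - x) - (x - c) := by
  have hsplit : Set.Ioc c d = Set.Ioc c x ∪ Set.Ioc x d := (Set.Ioc_union_Ioc_eq_Ioc h1 h2).symm
  rw [hsplit, setIntegral_union (Set.Ioc_disjoint_Ioc_of_le le_rfl) measurableSet_Ioc
    (integrable_step₂ _ _ measure_Ioc_lt_top) (integrable_step₂ _ _ measure_Ioc_lt_top)]
  have e1 : ∫ v in Set.Ioc c x, (if v < x then (-1 : ℝ) else 1)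
      = ∫ _ in Set.Ioc c x, (-1 : ℝ) := by
    rw [integral_Ioc_eq_integral_Ioo, integral_Ioc_eq_integral_Ioo]
    refine setIntegral_congr_fun measurableSet_Ioo ?_
    intro v hv; simp [hv.2]
  have e2 : ∫ v in Set.Ioc x d, (if v < x then (-1 : ℝ) else 1) = ∫ _ in Set.Ioc x d, (1 : ℝ) := by
    refine setIntegral_congr_fun measurableSet_Ioc ?_
    intro v hv; simp [not_lt.mpr hv.1.le]
  rw [e1, e2]
  simp only [integral_const, measureReal_restrict_apply_univ, Real.volume_real_Ioc_of_le h1,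
    Real.volume_real_Ioc_of_le h2, Measure.restrict_apply_univ, Real.volume_Ioc, smul_eq_mul,
    ENNReal.toReal_ofReal (sub_nonneg.mpr h1), ENNReal.toReal_ofReal (sub_nonneg.mpr h2)]
  ring

theorem preisach_loop_signed_area
    (b₀ a₀ : ℝ) (hba : b₀ ≤ a₀) (μ : ℝ × ℝ → ℝ)
    (hμ : IntegrableOn μ (preisachTriangle b₀ a₀) volume) :
    (∫ v in b₀..a₀,
        (descendingBranch μ b₀ a₀ v - ascendingBranch μ b₀ a₀ v))
      = 2 * ∫ p in preisachTriangle b₀ a₀, μ p * (p.1 - p.2) ∧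
    ((∫ v in b₀..a₀,
        (descendingBranch μ b₀ a₀ v - ascendingBranch μ b₀ a₀ v)) = 0 ↔
      (∫ p in preisachTriangle b₀ a₀, μ p * (p.1 - p.2)) = 0) := by
  set T := preisachTriangle b₀ a₀ with hT
  have mT : MeasurableSet T := preisachTriangle_measurableSet b₀ a₀
  set c : ℝ → ℝ × ℝ → ℝ := fun v p =>
    (if p.2 > v then (-1 : ℝ) else 1) - (if p.1 < v then (1 : ℝ) else -1) with hc
  -- the combined integrand is bounded and measurable
  have hc_bdd : ∀ v p, |c v p| ≤ 2 := by
    intro v p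
    simp only [hc]
    by_cases h1 : p.2 > v <;> by_cases h2 : p.1 < v <;> simp [h1, h2] <;> norm_num
  have hc_meas : Measurable (fun q : ℝ × (ℝ × ℝ) => c q.1 q.2) := by
    apply Measurable.sub
    · exact Measurable.ite (measurableSet_lt measurable_fst (measurable_snd.comp measurable_snd))
        measurable_const measurable_const
    · exact Measurable.ite (measurableSet_lt (measurable_fst.comp measurable_snd) measurable_fst)
        measurable_const measurable_const
  -- integrability of each branch integrand
  have hbr : ∀ (g : ℝ × ℝ → ℝ), Measurable g → (∀ p, ‖g p‖ ≤ 2) →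
      IntegrableOn (fun p => μ p * g p) T volume := by
    intro g hg hgb
    have : IntegrableOn (fun p => g p * μ p) T volume :=
      hμ.bdd_mul (c := 2) hg.aestronglyMeasurable (Filter.Eventually.of_forall hgb)
    have heq : (fun p => μ p * g p) = fun p => g p * μ p := funext fun p => mul_comm _ _
    rw [heq]; exact this
  have hA : ∀ v, IntegrableOn (fun p : ℝ × ℝ => μ p * (if p.1 < v then (1 : ℝ) else -1))
      T volume := by
    intro v
    refine hbr _ (Measurable.ite (measurableSet_lt measurable_fst measurable_const)
      measurable_const measurable_const) ?_
    intro p; by_cases h : p.1 < v <;> simp [h]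
  have hD : ∀ v, IntegrableOn (fun p : ℝ × ℝ => μ p * (if p.2 > v then (-1 : ℝ) else 1))
      T volume := by
    intro v
    refine hbr _ (Measurable.ite (measurableSet_lt measurable_const measurable_snd)
      measurable_const measurable_const) ?_
    intro p; by_cases h : p.2 > v <;> simp [h]
  -- the branch difference as a single integral
  have hdiff : ∀ v, descendingBranch μ b₀ a₀ v - ascendingBranch μ b₀ a₀ v
      = ∫ p in T, μ p * c v p := by
    intro v
    rw [descendingBranch, ascendingBranch, ← integral_sub (hD v) (hA v)]
    simp only [hc, mul_sub]
  -- integrability on the product space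
  have hfin : IsFiniteMeasure (volume.restrict (Set.Ioc b₀ a₀)) :=
    ⟨by rw [Measure.restrict_apply_univ]; exact measure_Ioc_lt_top⟩
  have hFmeas : AEStronglyMeasurable (fun q : ℝ × (ℝ × ℝ) => μ q.2 * c q.1 q.2)
      ((volume.restrict (Set.Ioc b₀ a₀)).prod (volume.restrict T)) :=
    (hμ.aestronglyMeasurable.comp_snd).mul hc_meas.aestronglyMeasurable
  have hg : Integrable (fun q : ℝ × (ℝ × ℝ) => (2 : ℝ) * |μ q.2|)
      ((volume.restrict (Set.Ioc b₀ a₀)).prod (volume.restrict T)) :=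
    Integrable.mul_prod (integrable_const (2 : ℝ)) hμ.abs
  have hFint : Integrable (fun q : ℝ × (ℝ × ℝ) => μ q.2 * c q.1 q.2)
      ((volume.restrict (Set.Ioc b₀ a₀)).prod (volume.restrict T)) := by
    refine hg.mono' hFmeas ?_
    filter_upwards with q
    rw [Real.norm_eq_abs, abs_mul]
    calc |μ q.2| * |c q.1 q.2| ≤ |μ q.2| * 2 := by
          exact mul_le_mul_of_nonneg_left (hc_bdd _ _) (abs_nonneg _)
      _ = 2 * |μ q.2| := mul_comm _ _
  -- main computation
  have key : (∫ v in b₀..a₀, (descendingBranch μ b₀ a₀ v - ascendingBranch μ b₀ a₀ v))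
      = 2 * ∫ p in T, μ p * (p.1 - p.2) := by
    rw [intervalIntegral.integral_of_le hba]
    calc ∫ v in Set.Ioc b₀ a₀, (descendingBranch μ b₀ a₀ v - ascendingBranch μ b₀ a₀ v)
        = ∫ v in Set.Ioc b₀ a₀, ∫ p in T, μ p * c v p := by
          refine setIntegral_congr_fun measurableSet_Ioc fun v _ => hdiff v
      _ = ∫ p in T, ∫ v in Set.Ioc b₀ a₀, μ p * c v p := integral_integral_swap hFint
      _ = ∫ p in T, μ p * (2 * (p.1 - p.2)) := by
          refine setIntegral_congr_fun mT fun p hp => ?_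
          obtain ⟨h1, h2, h3⟩ := hp
          rw [MeasureTheory.integral_const_mul]
          congr 1
          have hsub : ∫ v in Set.Ioc b₀ a₀, c v p
              = (∫ v in Set.Ioc b₀ a₀, (if v < p.2 then (-1 : ℝ) else 1))
                - ∫ v in Set.Ioc b₀ a₀, (if p.1 < v then (1 : ℝ) else -1) := by
            rw [← integral_sub (integrable_step₂ p.2 _ measure_Ioc_lt_top)
              (integrable_step₁ p.1 _ measure_Ioc_lt_top)]
          rw [hsub, step_integral₂ b₀ a₀ p.2 h1 (h2.trans h3),
            step_integral₁ b₀ a₀ p.1 (h1.trans h2) h3]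
          ring
      _ = 2 * ∫ p in T, μ p * (p.1 - p.2) := by
          rw [show (fun p : ℝ × ℝ => μ p * (2 * (p.1 - p.2)))
              = fun p => 2 * (μ p * (p.1 - p.2)) from funext fun p => by ring,
            integral_const_mul _ _]
  refine ⟨key, ?_⟩
  rw [key]
  constructor
  · intro h
    have := mul_eq_zero.mp h
    rcases this with h | h
    · norm_num at h
    · exact h
  · intro h; rw [h, mul_zero]
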